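/- Let h(z) = ∑_{k=0}^∞ a_k z^k and g(z) = ∑_{k=0}^∞ b_k z^k be analytic functions on the unit disk 𝔻 satisfying |h(z)| + |g(z)| ≤ 1 for all z ∈ 𝔻. Then √(|a_0|² + |b_0|²) + ∑_{k=1}^∞ √(|a_k|² + |b_k|²) · r^k ≤ 1 for all r with 0 ≤ r ≤ 1/3. -/

import Mathlib

open Complex Metric Set Filter

private lemma key_norm_ineq (c w : ℂ) (hc : Complex.normSq c ≤ 1) (hw : Complex.normSq w ≤ 1) :
    ‖w - c‖ ≤ ‖1 - (starRingEnd ℂ) c * w‖ := by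
  have h1 : ‖w - c‖ ≤ ‖1 - (starRingEnd ℂ) c * w‖ := by
    rw [Complex.norm_def, Complex.norm_def]
    refine Real.sqrt_le_sqrt ?_
    have key : Complex.normSq (1 - (starRingEnd ℂ) c * w) - Complex.normSq (w - c)
        = (1 - Complex.normSq c) * (1 - Complex.normSq w) := by
      simp only [Complex.normSq_apply, Complex.sub_re, Complex.sub_im, Complex.mul_re,
        Complex.mul_im, Complex.one_re, Complex.one_im, Complex.conj_re, Complex.conj_im]
      ring
    nlinarith [Complex.normSq_nonneg (w - c)]
  simpa using h1

private lemma hasSum_zero_eval (cf : ℕ → ℂ) : HasSum (fun n => cf n * (0:ℂ)^n) (cf 0) := by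
  have := hasSum_single (f := fun n => cf n * (0:ℂ)^n) 0 (fun b hb => by simp [zero_pow hb])
  simpa using this

private lemma schur_one (cf : ℕ → ℂ) (f : ℂ → ℂ)
    (hsum : ∀ z : ℂ, ‖z‖ < 1 → HasSum (fun n => cf n * z ^ n) (f z))
    (hb : ∀ z : ℂ, ‖z‖ < 1 → ‖f z‖ ≤ 1) :
    ‖cf 1‖ ≤ 1 - ‖cf 0‖ ^ 2 := by
  have hf0 : f 0 = cf 0 := ((hsum 0 (by norm_num)).unique (hasSum_zero_eval cf))
  have hc0le : ‖cf 0‖ ≤ 1 := by rw [← hf0]; exact hb 0 (by norm_num)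
  -- power series representation
  set p := FormalMultilinearSeries.ofScalars ℂ cf with hp_def
  have hpnorm : ∀ n, ‖p n‖ = ‖cf n‖ := fun n => FormalMultilinearSeries.ofScalars_norm ℂ cf n
  have hradius : 1 ≤ p.radius := by
    refine ENNReal.le_of_forall_nnreal_lt (fun ρ hρ => ?_)
    have hρ1 : (ρ:ℝ) < 1 := by exact_mod_cast hρ
    have hasum := (hsum ((ρ:ℝ):ℂ) (by rw [Complex.norm_real]; exact abs_lt.mpr ⟨by linarith [ρ.coe_nonneg], hρ1⟩)).summable
    have htends : Filter.Tendsto (fun n => ‖cf n * ((ρ:ℝ):ℂ)^n‖) atTop (nhds 0) := by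
      simpa using hasum.tendsto_atTop_zero.norm
    have hbdd : BddAbove (Set.range fun n => ‖cf n * ((ρ:ℝ):ℂ)^n‖) := htends.bddAbove_range
    obtain ⟨C, hC⟩ := hbdd
    refine p.le_radius_of_bound C (fun n => ?_)
    have := hC (Set.mem_range_self n)
    simpa [hpnorm, norm_mul, norm_pow, _root_.abs_of_nonneg ρ.2] using this
  have hcoeff : ∀ n, p.coeff n = cf n := by
    intro n
    have h : (FormalMultilinearSeries.ofScalars ℂ cf).coeff n = cf n • (1:ℂ)^n :=
      FormalMultilinearSeries.ofScalars_apply_eq cf 1 n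
    simpa [hp_def] using h
  have hps : HasFPowerSeriesOnBall f p 0 1 := by
    refine ⟨hradius, one_pos, fun {y} hy => ?_⟩
    have hy1 : ‖y‖ < 1 := by
      rw [← ENNReal.coe_one, Metric.eball_coe, NNReal.coe_one, mem_ball_zero_iff] at hy
      exact hy
    have := hsum y hy1
    simpa [FormalMultilinearSeries.ofScalars_apply_eq, smul_eq_mul, mul_comm, hcoeff] using this
  have hdiff : DifferentiableOn ℂ f (ball (0:ℂ) 1) := by
    intro z hz
    have hz' : z ∈ Metric.eball (0:ℂ) 1 := by
      rw [mem_ball, dist_zero_right] at hz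
      rw [← ENNReal.coe_one, Metric.eball_coe, NNReal.coe_one, mem_ball_zero_iff]
      exact hz
    exact ((hps.analyticAt_of_mem hz').differentiableAt).differentiableWithinAt
  have hderiv : deriv f 0 = cf 1 := by
    rw [hps.hasFPowerSeriesAt.deriv]
    exact hcoeff 1
  have hd0 : HasDerivAt f (cf 1) 0 := by
    rw [← hderiv]
    refine DifferentiableAt.hasDerivAt ?_
    exact (hdiff.differentiableAt (isOpen_ball.mem_nhds (by simp)))
  by_cases hc : ‖cf 0‖ < 1
  · set c := cf 0 with hc_def
    have hnsq : Complex.normSq c < 1 := by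
      have : ‖c‖^2 < 1 := by nlinarith [norm_nonneg c]
      rwa [← Complex.sq_norm]
    set D := fun z => 1 - (starRingEnd ℂ) c * f z with hD_def
    have hDnorm : ∀ z, ‖z‖ < 1 → (1 - ‖c‖ : ℝ) ≤ ‖D z‖ := by
      intro z hz
      have h1 : ‖(starRingEnd ℂ) c * f z‖ ≤ ‖c‖ := by
        rw [norm_mul, RCLike.norm_conj]
        calc ‖c‖ * ‖f z‖ ≤ ‖c‖ * 1 := by
              exact mul_le_mul_of_nonneg_left (hb z hz) (norm_nonneg c)
          _ = ‖c‖ := mul_one _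
      calc (1 - ‖c‖ : ℝ) ≤ ‖(1:ℂ)‖ - ‖(starRingEnd ℂ) c * f z‖ := by
            simp only [norm_one]; linarith
        _ ≤ ‖D z‖ := norm_sub_norm_le _ _
    have hDne : ∀ z, ‖z‖ < 1 → D z ≠ 0 := by
      intro z hz h0
      have := hDnorm z hz
      rw [h0, norm_zero] at this
      linarith
    set φ := fun z => (f z - c) / D z with hφ_def
    have hφdiff : DifferentiableOn ℂ φ (ball (0:ℂ) 1) := by
      refine DifferentiableOn.div (hdiff.sub_const c) ?_ ?_
      · exact (differentiableOn_const _).sub ((hdiff.const_mul _))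
      · intro z hz
        exact hDne z (by simpa using hz)
    have hφ0 : φ 0 = 0 := by
      simp [hφ_def, hf0]
    have hφle : ∀ z ∈ ball (0:ℂ) 1, ‖φ z‖ ≤ 1 := by
      intro z hz
      rw [mem_ball, dist_zero_right] at hz
      have hkey : ‖f z - c‖ ≤ ‖D z‖ := by
        refine key_norm_ineq c (f z) (le_of_lt hnsq) ?_
        have : ‖f z‖^2 ≤ 1 := by nlinarith [hb z hz, norm_nonneg (f z)]
        rwa [← Complex.sq_norm]
      rw [hφ_def]
      simp only [norm_div]
      exact div_le_one_of_le₀ hkey (norm_nonneg _)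
    have hφd : HasDerivAt φ (cf 1 / ((1 - Complex.normSq c : ℝ) : ℂ)) 0 := by
      have hN : HasDerivAt (fun z => f z - c) (cf 1) 0 := hd0.sub_const c
      have hD' : HasDerivAt D (0 - (starRingEnd ℂ) c * cf 1) 0 :=
        (hasDerivAt_const 0 (1:ℂ)).sub (hd0.const_mul ((starRingEnd ℂ) c))
      have hD0 : D 0 = ((1 - Complex.normSq c : ℝ) : ℂ) := by
        show 1 - (starRingEnd ℂ) c * f 0 = _
        rw [hf0, mul_comm, Complex.mul_conj]
        push_cast
        ring
      have hD0ne : D 0 ≠ 0 := by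
        rw [hD0]
        exact Complex.ofReal_ne_zero.mpr (by linarith)
      have hdiv : HasDerivAt φ ((cf 1 * D 0 - (f 0 - c) * (0 - (starRingEnd ℂ) c * cf 1)) / D 0 ^ 2) 0 :=
        hN.div hD' hD0ne
      convert hdiv using 1
      rw [← hD0]
      have hzero : f 0 - c = 0 := by rw [hf0]; ring
      rw [hzero]
      field_simp
      ring
    have hSch : ‖deriv φ 0‖ ≤ 1 := by
      by_contra hgt
      push_neg at hgt
      set R := (1 + ‖deriv φ 0‖)/2 with hR_def
      have hR1 : 1 < R := by rw [hR_def]; linarith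
      have hmaps : Set.MapsTo φ (ball (0:ℂ) 1) (ball (φ 0) R) := by
        intro z hz
        rw [mem_ball, hφ0, dist_zero_right]
        exact lt_of_le_of_lt (hφle z hz) hR1
      have := Complex.norm_deriv_le_div_of_mapsTo_ball hφdiff (hmaps.mono_right ball_subset_closedBall) one_pos
      rw [div_one] at this
      rw [hR_def] at this
      linarith
    rw [hφd.deriv] at hSch
    have hpos : (0:ℝ) < 1 - Complex.normSq c := by linarith
    rw [norm_div, Complex.norm_real, Real.norm_eq_abs, abs_of_pos hpos, div_le_one hpos] at hSch
    have : (1:ℝ) - ‖c‖^2 = 1 - Complex.normSq c := by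
      rw [Complex.sq_norm]
    linarith
  · -- constant case
    have hceq : ‖cf 0‖ = 1 := le_antisymm hc0le (not_lt.mp hc)
    have hmax : IsMaxOn (norm ∘ f) (ball (0:ℂ) 1) 0 := by
      intro z hz
      simp only [Function.comp_apply, hf0]
      calc ‖f z‖ ≤ 1 := hb z (by simpa using hz)
        _ = ‖cf 0‖ := hceq.symm
    have heq := Complex.eqOn_of_isPreconnected_of_isMaxOn_norm
      (convex_ball (0:ℂ) 1).isPreconnected isOpen_ball hdiff (mem_ball_self one_pos) hmax
    have hev : f =ᶠ[nhds (0:ℂ)] (fun _ => f 0) := by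
      refine Filter.eventuallyEq_of_mem (isOpen_ball.mem_nhds (mem_ball_self one_pos)) ?_
      intro z hz
      exact heq hz
    have hzero : deriv f 0 = 0 := by
      rw [hev.deriv_eq]
      simp
    rw [hderiv] at hzero
    rw [hzero, hceq]
    simp

private lemma schur_coeff (cf : ℕ → ℂ) (f : ℂ → ℂ)
    (hsum : ∀ z : ℂ, ‖z‖ < 1 → HasSum (fun n => cf n * z ^ n) (f z))
    (hb : ∀ z : ℂ, ‖z‖ < 1 → ‖f z‖ ≤ 1) (k : ℕ) (hk : 1 ≤ k) :
    ‖cf k‖ ≤ 1 - ‖cf 0‖ ^ 2 := by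
  set dg : ℕ → ℂ := fun j => cf (j * k) with hdg
  set gg : ℂ → ℂ := fun w => ∑' j, dg j * w ^ j with hgg
  have hkey : ∀ w : ℂ, ‖w‖ < 1 → HasSum (fun j => dg j * w ^ j) (gg w) ∧ ‖gg w‖ ≤ 1 := by
    intro w hw
    by_cases hw0 : w = 0
    · subst hw0
      have hg0 : gg 0 = dg 0 := (hasSum_zero_eval dg).tsum_eq
      refine ⟨hg0 ▸ hasSum_zero_eval dg, ?_⟩
      rw [hg0]
      have hf0 : f 0 = cf 0 := (hsum 0 (by norm_num)).unique (hasSum_zero_eval cf)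
      have h1 := hb 0 (by norm_num)
      rw [hf0] at h1
      simpa [hdg] using h1
    · set z : ℂ := Complex.exp (Complex.log w / k) with hz_def
      have hkne : (k:ℂ) ≠ 0 := Nat.cast_ne_zero.mpr (by omega)
      have hzk : z ^ k = w := by
        rw [hz_def, ← Complex.exp_nat_mul, mul_div_cancel₀ _ hkne]
        exact Complex.exp_log hw0
      have hzlt : ‖z‖ < 1 := by
        by_contra hge
        push_neg at hge
        have h2 : (1:ℝ) ≤ ‖z‖ ^ k := one_le_pow₀ hge
        rw [← norm_pow, hzk] at h2
        linarith
      set ζ : ℂ := Complex.exp (2 * Real.pi * Complex.I / k) with hζ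
      have hprim : IsPrimitiveRoot ζ k := Complex.isPrimitiveRoot_exp k (by omega)
      have hζnorm : ‖ζ‖ = 1 := by
        rw [hζ, Complex.norm_exp]
        have h2 : 2 * (Real.pi:ℂ) * Complex.I / (k:ℂ) = ((2 * Real.pi / k : ℝ)) * Complex.I := by
          push_cast
          ring
        rw [h2]
        simp [Complex.mul_re]
      have hsumroots : ∀ n : ℕ, (∑ m ∈ Finset.range k, (ζ ^ n) ^ m) = if k ∣ n then (k:ℂ) else 0 := by
        intro n
        by_cases hdvd : k ∣ n
        · have h1 : ζ ^ n = 1 := (hprim.pow_eq_one_iff_dvd n).mpr hdvd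
          simp [h1, hdvd]
        · have hne : ζ ^ n ≠ 1 := fun h => hdvd ((hprim.pow_eq_one_iff_dvd n).mp h)
          rw [geom_sum_eq hne]
          have h1 : (ζ ^ n) ^ k = 1 := by
            rw [← pow_mul, mul_comm, pow_mul, hprim.pow_eq_one, one_pow]
          simp [h1, hdvd]
      have hSm : ∀ m ∈ Finset.range k, HasSum (fun n => cf n * (ζ ^ m * z) ^ n) (f (ζ ^ m * z)) := by
        intro m _
        apply hsum
        rw [norm_mul, norm_pow, hζnorm, one_pow, one_mul]
        exact hzlt
      have hT : HasSum (fun n => ∑ m ∈ Finset.range k, cf n * (ζ ^ m * z) ^ n)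
          (∑ m ∈ Finset.range k, f (ζ ^ m * z)) := hasSum_sum hSm
      have hfun : (fun n => ∑ m ∈ Finset.range k, cf n * (ζ ^ m * z) ^ n)
          = fun n => (if k ∣ n then (k:ℂ) else 0) * (cf n * z ^ n) := by
        funext n
        have h2 : ∀ m, cf n * (ζ ^ m * z) ^ n = (ζ ^ n) ^ m * (cf n * z ^ n) := by
          intro m
          rw [mul_pow, ← pow_mul, mul_comm m n, pow_mul]
          ring
        rw [Finset.sum_congr rfl (fun m _ => h2 m), ← Finset.sum_mul, hsumroots n]
      rw [hfun] at hT
      have hT2 := hT.div_const (k:ℂ)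
      have hfun2 : (fun n => (if k ∣ n then (k:ℂ) else 0) * (cf n * z ^ n) / k)
          = fun n => if k ∣ n then cf n * z ^ n else 0 := by
        funext n
        split_ifs with h2
        · field_simp
        · simp
      rw [hfun2] at hT2
      have hinj : Function.Injective (fun j : ℕ => j * k) := fun x y hxy => by
        simpa using Nat.eq_of_mul_eq_mul_right (by omega : 0 < k) hxy
      have hsupp : ∀ n, n ∉ Set.range (fun j : ℕ => j * k) →
          (if k ∣ n then cf n * z ^ n else 0) = 0 := by
        intro n hn
        rw [if_neg]
        intro hdvd
        obtain ⟨j, hj⟩ := hdvd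
        refine hn ⟨j, ?_⟩
        show j * k = n
        rw [mul_comm]
        exact hj.symm
      have hT3 : HasSum (fun j => if k ∣ j * k then cf (j * k) * z ^ (j * k) else 0)
          ((∑ m ∈ Finset.range k, f (ζ ^ m * z)) / k) :=
        (Function.Injective.hasSum_iff hinj hsupp).mpr hT2
      have hfun3 : (fun j => if k ∣ j * k then cf (j * k) * z ^ (j * k) else 0)
          = fun j => dg j * w ^ j := by
        funext j
        rw [if_pos (dvd_mul_left k j), hdg, mul_comm j k, pow_mul, hzk]
        simp [mul_comm k j]
      rw [hfun3] at hT3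
      have hggw : gg w = (∑ m ∈ Finset.range k, f (ζ ^ m * z)) / k := hT3.tsum_eq
      refine ⟨hggw ▸ hT3, ?_⟩
      rw [hggw, norm_div, Complex.norm_natCast, div_le_one (by exact_mod_cast Nat.pos_of_ne_zero (by omega))]
      calc ‖∑ m ∈ Finset.range k, f (ζ ^ m * z)‖
          ≤ ∑ m ∈ Finset.range k, ‖f (ζ ^ m * z)‖ := norm_sum_le _ _
        _ ≤ ∑ _m ∈ Finset.range k, (1:ℝ) := by
            refine Finset.sum_le_sum (fun m _ => hb _ ?_)
            rw [norm_mul, norm_pow, hζnorm, one_pow, one_mul]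
            exact hzlt
        _ = k := by simp
  have h1 := schur_one dg gg (fun z hz => (hkey z hz).1) (fun z hz => (hkey z hz).2)
  simpa [hdg] using h1

private lemma normsq_par (x y : ℂ) : ‖x + y‖^2 + ‖x - y‖^2 = 2*‖x‖^2 + 2*‖y‖^2 := by
  simp only [Complex.sq_norm, Complex.normSq_apply, Complex.add_re,
    Complex.add_im, Complex.sub_re, Complex.sub_im]
  ring

private lemma normsq_cross (x y : ℂ) (hre : ((starRingEnd ℂ) x * y).re = 0) :
    ‖x + y‖^2 = ‖x‖^2 + ‖y‖^2 := by
  simp only [Complex.sq_norm, Complex.normSq_apply, Complex.add_re,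
    Complex.add_im, Complex.mul_re, Complex.mul_im, Complex.conj_re, Complex.conj_im] at *
  linear_combination 2 * hre



/-- Proposition 2 of Kayumov–Ponnusamy: if `h, g` are analytic on the unit disk with
`|h| + |g| ≤ 1`, then `√(|a₀|² + |b₀|²) + ∑_{k≥1} √(|aₖ|² + |bₖ|²) rᵏ ≤ 1` for
`r ≤ 1/3`. -/
theorem bohr_pair_l2_inequality
    (a b : ℕ → ℂ) (h g : ℂ → ℂ)
    (hh : ∀ z : ℂ, ‖z‖ < 1 → HasSum (fun k : ℕ => a k * z ^ k) (h z))
    (hg : ∀ z : ℂ, ‖z‖ < 1 → HasSum (fun k : ℕ => b k * z ^ k) (g z))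
    (hbound : ∀ z : ℂ, ‖z‖ < 1 → ‖h z‖ + ‖g z‖ ≤ 1) :
    ∀ r : ℝ, 0 ≤ r → r ≤ 1 / 3 →
      Real.sqrt (‖a 0‖ ^ 2 + ‖b 0‖ ^ 2) +
        (∑' k : ℕ, Real.sqrt (‖a (k + 1)‖ ^ 2 + ‖b (k + 1)‖ ^ 2) * r ^ (k + 1)) ≤ 1 := by
  intro r hr0 hr13
  have ha0 : h 0 = a 0 := (hh 0 (by norm_num)).unique (hasSum_zero_eval a)
  have hb0 : g 0 = b 0 := (hg 0 (by norm_num)).unique (hasSum_zero_eval b)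
  have hsum0 : ‖a 0‖ + ‖b 0‖ ≤ 1 := by
    have := hbound 0 (by norm_num)
    rwa [ha0, hb0] at this
  set c2 : ℝ := ‖a 0‖^2 + ‖b 0‖^2 with hc2
  have hc2nonneg : 0 ≤ c2 := by positivity
  have hc2le1 : c2 ≤ 1 := by nlinarith [norm_nonneg (a 0), norm_nonneg (b 0)]
  set w : ℂ := (starRingEnd ℂ) (a 0) * b 0 with hw
  obtain ⟨ε, hεnorm, hεre⟩ : ∃ ε : ℂ, ‖ε‖ = 1 ∧ (w * ε).re = 0 := by
    by_cases hw0 : w = 0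
    · exact ⟨1, by simp, by simp [hw0]⟩
    · refine ⟨Complex.I * (starRingEnd ℂ) w / (‖w‖ : ℂ), ?_, ?_⟩
      · rw [norm_div, norm_mul, Complex.norm_I, one_mul, RCLike.norm_conj, Complex.norm_real,
          Real.norm_eq_abs, abs_norm, div_self (norm_ne_zero_iff.mpr hw0)]
      · have h4 : w * (Complex.I * (starRingEnd ℂ) w / (‖w‖ : ℂ))
            = Complex.I * ((Complex.normSq w : ℂ) / (‖w‖ : ℂ)) := by
          rw [← Complex.mul_conj w]
          ring
        rw [h4]
        have h5 : Complex.I * ((Complex.normSq w : ℂ) / (‖w‖ : ℂ))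
            = ((Complex.normSq w / ‖w‖ : ℝ) : ℂ) * Complex.I := by
          push_cast
          ring
        rw [h5]
        simp [Complex.mul_re]
  -- hassum for combined functions
  have hFsum : ∀ σ : ℂ, ∀ z : ℂ, ‖z‖ < 1 →
      HasSum (fun n => (a n + σ * b n) * z ^ n) (h z + σ * g z) := by
    intro σ z hz
    have h1 := (hh z hz).add ((hg z hz).mul_left σ)
    have h2 : (fun n => (a n + σ * b n) * z ^ n)
        = fun n => a n * z ^ n + σ * (b n * z ^ n) := by
      funext n
      ring
    rw [h2]
    exact h1
  have hFb : ∀ σ : ℂ, ‖σ‖ = 1 → ∀ z : ℂ, ‖z‖ < 1 → ‖h z + σ * g z‖ ≤ 1 := by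
    intro σ hσ z hz
    calc ‖h z + σ * g z‖ ≤ ‖h z‖ + ‖σ * g z‖ := norm_add_le _ _
      _ = ‖h z‖ + ‖g z‖ := by rw [norm_mul, hσ, one_mul]
      _ ≤ 1 := hbound z hz
  have hεc0 : ‖a 0 + ε * b 0‖^2 = c2 := by
    have hre1 : ((starRingEnd ℂ) (a 0) * (ε * b 0)).re = 0 := by
      have he : (starRingEnd ℂ) (a 0) * (ε * b 0) = w * ε := by rw [hw]; ring
      rw [he]
      exact hεre
    rw [normsq_cross _ _ hre1, norm_mul, hεnorm, one_mul]
  have hεc0' : ‖a 0 + (-ε) * b 0‖^2 = c2 := by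
    have hre1 : ((starRingEnd ℂ) (a 0) * (-ε * b 0)).re = 0 := by
      have he : (starRingEnd ℂ) (a 0) * (-ε * b 0) = -(w * ε) := by rw [hw]; ring
      rw [he, Complex.neg_re, hεre, neg_zero]
    rw [normsq_cross _ _ hre1, norm_mul, norm_neg, hεnorm, one_mul]
  have hcoeffbound : ∀ kk : ℕ, Real.sqrt (‖a (kk+1)‖^2 + ‖b (kk+1)‖^2) ≤ 1 - c2 := by
    intro kk
    have hplus := schur_coeff (fun n => a n + ε * b n) (fun z => h z + ε * g z)
      (hFsum ε) (hFb ε hεnorm) (kk+1) (by omega)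
    have hminus := schur_coeff (fun n => a n + (-ε) * b n) (fun z => h z + (-ε) * g z)
      (hFsum (-ε)) (hFb (-ε) (by rw [norm_neg]; exact hεnorm)) (kk+1) (by omega)
    simp only [hεc0] at hplus
    simp only [hεc0'] at hminus
    have hpar := normsq_par (a (kk+1)) (ε * b (kk+1))
    have hεb : ‖ε * b (kk+1)‖ = ‖b (kk+1)‖ := by rw [norm_mul, hεnorm, one_mul]
    have hms : a (kk+1) + (-ε) * b (kk+1) = a (kk+1) - ε * b (kk+1) := by ring
    rw [hms] at hminus
    have h1c2 : 0 ≤ 1 - c2 := by linarith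
    have hsq1 : ‖a (kk+1) + ε * b (kk+1)‖^2 ≤ (1-c2)^2 := by
      nlinarith [norm_nonneg (a (kk+1) + ε * b (kk+1))]
    have hsq2 : ‖a (kk+1) - ε * b (kk+1)‖^2 ≤ (1-c2)^2 := by
      nlinarith [norm_nonneg (a (kk+1) - ε * b (kk+1))]
    have hle : ‖a (kk+1)‖^2 + ‖b (kk+1)‖^2 ≤ (1 - c2)^2 := by
      rw [← hεb]
      nlinarith
    calc Real.sqrt (‖a (kk+1)‖^2 + ‖b (kk+1)‖^2) ≤ Real.sqrt ((1-c2)^2) :=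
          Real.sqrt_le_sqrt hle
      _ = 1 - c2 := Real.sqrt_sq h1c2
  -- sum it up
  have hr1 : r < 1 := by linarith
  have hsummable : Summable (fun kk : ℕ => (1 - c2) * r ^ (kk+1)) := by
    have h1 : Summable (fun kk : ℕ => r ^ (kk+1)) := by
      have h2 := (summable_geometric_of_lt_one hr0 hr1).mul_left r
      refine h2.congr (fun n => ?_)
      rw [← pow_succ']
    exact h1.mul_left _
  have hterm : ∀ kk : ℕ, Real.sqrt (‖a (kk+1)‖^2 + ‖b (kk+1)‖^2) * r ^ (kk+1)
      ≤ (1 - c2) * r ^ (kk+1) := fun kk =>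
    mul_le_mul_of_nonneg_right (hcoeffbound kk) (pow_nonneg hr0 _)
  have hlsummable : Summable (fun kk : ℕ => Real.sqrt (‖a (kk+1)‖^2 + ‖b (kk+1)‖^2) * r ^ (kk+1)) :=
    Summable.of_nonneg_of_le (fun kk => mul_nonneg (Real.sqrt_nonneg _) (pow_nonneg hr0 _))
      hterm hsummable
  have htsum_le := Summable.tsum_le_tsum hterm hlsummable hsummable
  have hgeo : ∑' kk : ℕ, (1 - c2) * r ^ (kk+1) = (1 - c2) * (r * (1 - r)⁻¹) := by
    rw [tsum_mul_left]
    congr 1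
    have h3 : (fun kk : ℕ => r ^ (kk+1)) = fun kk : ℕ => r * r ^ kk := by
      funext kk
      rw [← pow_succ']
    rw [h3, tsum_mul_left, tsum_geometric_of_lt_one hr0 hr1]
  rw [hgeo] at htsum_le
  have hs2 : Real.sqrt c2 ^ 2 = c2 := Real.sq_sqrt hc2nonneg
  have hsle : Real.sqrt c2 ≤ 1 := by
    rw [show (1:ℝ) = Real.sqrt 1 by rw [Real.sqrt_one]]
    exact Real.sqrt_le_sqrt hc2le1
  have hsnn : 0 ≤ Real.sqrt c2 := Real.sqrt_nonneg c2
  have h1r : 0 < 1 - r := by linarith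
  have hrr : r * (1-r)⁻¹ ≤ 1/2 := by
    rw [← div_eq_mul_inv, div_le_iff₀ h1r]
    linarith
  have hfin : (1 - c2) * (r * (1-r)⁻¹) ≤ (1 - c2) * (1/2) :=
    mul_le_mul_of_nonneg_left hrr (by linarith)
  calc Real.sqrt (‖a 0‖^2 + ‖b 0‖^2) + ∑' kk : ℕ, Real.sqrt (‖a (kk+1)‖^2 + ‖b (kk+1)‖^2) * r ^ (kk+1)
      ≤ Real.sqrt c2 + (1 - c2) * (1/2) := by
        rw [hc2]
        exact add_le_add le_rfl (le_trans htsum_le hfin)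
    _ ≤ 1 := by nlinarith
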